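/- Fix integers d ≥ 3 and ℓ ≥ 1, and let z, Δ ∈ ℂ with Im z > 0 and Im Δ ≥ 0. Define Y_ℓ(Δ,z) := ((H_{𝒴_ℓ} − z·I − Δ·𝕀∂)⁻¹)_{oo} and X_ℓ(Δ,z) := ((H_{𝒳_ℓ} − z·I − Δ·𝕀∂)⁻¹)_{oo}. Then m_sc(z) is a fixed point of Y_ℓ and X_ℓ evaluates m_d at it: Y_ℓ(m_sc(z), z) = m_sc(z) and X_ℓ(m_sc(z), z) = m_d(z). -/

import Mathlib

open scoped Classical

noncomputable section

/-- Vertices of the ball of radius `ℓ` in the infinite `m`-ary rooted tree: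
words over `Fin m` of length at most `ℓ`. -/
def TreeBallY (m ℓ : ℕ) : Type := {l : List (Fin m) // l.length ≤ ℓ}

instance (m ℓ : ℕ) : DecidableEq (TreeBallY m ℓ) :=
  inferInstanceAs (DecidableEq {l : List (Fin m) // l.length ≤ ℓ})

instance (m ℓ : ℕ) : Fintype (TreeBallY m ℓ) :=
  Fintype.ofSurjective
    (fun p : (Σ k : Fin (ℓ + 1), List.Vector (Fin m) k) =>
      (⟨p.2.toList, by
        have h1 : p.2.toList.length = (p.1 : ℕ) := p.2.toList_length
        have h2 := p.1.isLt
        omega⟩ : TreeBallY m ℓ))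
    (fun l => ⟨⟨⟨l.1.length, Nat.lt_succ_of_le l.2⟩, ⟨l.1, rfl⟩⟩, rfl⟩)

/-- The tree structure on the ball of radius `ℓ` of the `m`-ary rooted tree:
`x` is adjacent to `y` iff one of them is obtained from the other by appending one letter
(i.e. one is the parent of the other). -/
def treeGraphY (m ℓ : ℕ) : SimpleGraph (TreeBallY m ℓ) :=
  SimpleGraph.fromRel (fun x y => ∃ a : Fin m, y.1 = x.1 ++ [a])

/-- The root of the tree: the empty word. -/
def rootY (m ℓ : ℕ) : TreeBallY m ℓ := ⟨[], Nat.zero_le _⟩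

/-- The normalized adjacency matrix `A/√(d-1)` of the ball `𝒴_ℓ` of radius `ℓ` in the
infinite `(d-1)`-ary tree. -/
def HmatY (d ℓ : ℕ) : Matrix (TreeBallY (d - 1) ℓ) (TreeBallY (d - 1) ℓ) ℂ :=
  fun x y => if (treeGraphY (d - 1) ℓ).Adj x y then (Real.sqrt ((d : ℝ) - 1) : ℂ)⁻¹ else 0

/-- The leaf indicator `𝕀∂` of `𝒴_ℓ`: the diagonal 0-1 matrix whose entry at `x` is `1`
exactly when `dist(x, o) = ℓ`. -/
def IbdY (d ℓ : ℕ) : Matrix (TreeBallY (d - 1) ℓ) (TreeBallY (d - 1) ℓ) ℂ :=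
  Matrix.diagonal (fun x => if (treeGraphY (d - 1) ℓ).dist (rootY (d - 1) ℓ) x = ℓ then 1 else 0)

/-- Vertices of the ball `𝒳_ℓ` of radius `ℓ` in the infinite `d`-regular tree: the root
(`none`), or a first step in `Fin d` followed by a word over `Fin (d-1)` of length at most
`ℓ - 1`. -/
def TreeBallX (d ℓ : ℕ) : Type := Option (Fin d × TreeBallY (d - 1) (ℓ - 1))

instance (d ℓ : ℕ) : DecidableEq (TreeBallX d ℓ) :=
  inferInstanceAs (DecidableEq (Option (Fin d × TreeBallY (d - 1) (ℓ - 1))))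

instance (d ℓ : ℕ) : Fintype (TreeBallX d ℓ) :=
  inferInstanceAs (Fintype (Option (Fin d × TreeBallY (d - 1) (ℓ - 1))))

/-- The tree structure on the ball `𝒳_ℓ` of radius `ℓ` of the `d`-regular tree: the root is
adjacent to the `d` one-step vertices, and within each branch two vertices are adjacent iff one
is the parent of the other. -/
def treeGraphX (d ℓ : ℕ) : SimpleGraph (TreeBallX d ℓ) :=
  SimpleGraph.fromRel (fun x y =>
    (∃ a : Fin d, x = none ∧ y = some (a, ⟨[], Nat.zero_le _⟩)) ∨
    (∃ (a : Fin d) (s t : TreeBallY (d - 1) (ℓ - 1)),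
      x = some (a, s) ∧ y = some (a, t) ∧ ∃ b : Fin (d - 1), t.1 = s.1 ++ [b]))

/-- The root of the `d`-regular tree ball `𝒳_ℓ`. -/
def rootX (d ℓ : ℕ) : TreeBallX d ℓ := none

/-- The normalized adjacency matrix `A/√(d-1)` of the ball `𝒳_ℓ` of radius `ℓ` in the
infinite `d`-regular tree. -/
def HmatX (d ℓ : ℕ) : Matrix (TreeBallX d ℓ) (TreeBallX d ℓ) ℂ :=
  fun x y => if (treeGraphX d ℓ).Adj x y then (Real.sqrt ((d : ℝ) - 1) : ℂ)⁻¹ else 0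

/-- The leaf indicator `𝕀∂` of `𝒳_ℓ`. -/
def IbdX (d ℓ : ℕ) : Matrix (TreeBallX d ℓ) (TreeBallX d ℓ) ℂ :=
  Matrix.diagonal (fun x => if (treeGraphX d ℓ).dist (rootX d ℓ) x = ℓ then 1 else 0)

/-- Longest common prefix of two words. -/
def lcp {m : ℕ} : List (Fin m) → List (Fin m) → List (Fin m)
  | [], _ => []
  | _ :: _, [] => []
  | a :: s, b :: t => if a = b then a :: lcp s t else []

theorem lcp_length_le_left {m : ℕ} : ∀ s t : List (Fin m), (lcp s t).length ≤ s.length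
  | [], _ => by simp [lcp]
  | _ :: _, [] => by simp [lcp]
  | a :: s, b :: t => by
    by_cases h : a = b
    · simp only [lcp, if_pos h, List.length_cons]
      exact Nat.succ_le_succ (lcp_length_le_left s t)
    · simp [lcp, h]

/-- The least common ancestor of two vertices of `𝒴_ℓ`: their longest common prefix. -/
def lcaY {m ℓ : ℕ} (x y : TreeBallY m ℓ) : TreeBallY m ℓ :=
  ⟨lcp x.1 y.1, le_trans (lcp_length_le_left _ _) x.2⟩

/-- `anc(x,y)`: the distance from the least common ancestor of `x` and `y` to the root `o`. -/
def ancY {m ℓ : ℕ} (x y : TreeBallY m ℓ) : ℕ :=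
  (treeGraphY m ℓ).dist (rootY m ℓ) (lcaY x y)

end


lemma aux_inv_entry {n : Type*} [Fintype n] [DecidableEq n] (M : Matrix n n ℂ)
    (h : IsUnit M.det) (v : n → ℂ) (o : n) (hv : M.mulVec v = Pi.single o 1) :
    M⁻¹ o o = v o := by
  have h1 : M⁻¹ * M = 1 := Matrix.nonsing_inv_mul M h
  have h2 : M⁻¹.mulVec (M.mulVec v) = v := by
    rw [Matrix.mulVec_mulVec, h1, Matrix.one_mulVec]
  rw [hv] at h2
  have h3 := congrFun h2 o
  simpa [Matrix.mulVec_single] using h3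

lemma aux_det_ne_zero {n : Type*} [Fintype n] [DecidableEq n] (M : Matrix n n ℂ)
    (hsym : ∀ i j, i ≠ j → (starRingEnd ℂ) (M i j) = M j i)
    (hdiag : ∀ i, (M i i).im < 0) : IsUnit M.det := by
  rw [isUnit_iff_ne_zero]
  intro hdet
  obtain ⟨x, hx0, hx⟩ := Matrix.exists_mulVec_eq_zero_iff.mpr hdet
  set f : n → n → ℝ := fun i j => ((starRingEnd ℂ) (x i) * (M i j * x j)).im with hf
  have hS : ∑ i, ∑ j, f i j = 0 := by
    have : ∑ i, (starRingEnd ℂ) (x i) * (M.mulVec x) i = 0 := by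
      rw [hx]; simp
    have him := congrArg Complex.im this
    rw [Complex.im_sum] at him
    simp only [Complex.zero_im] at him
    rw [← him]
    apply Finset.sum_congr rfl
    intro i _
    rw [Matrix.mulVec, dotProduct, Finset.mul_sum, Complex.im_sum]
  have hpair : ∀ i j, f i j + f j i = if i = j then 2 * f i i else 0 := by
    intro i j
    by_cases h : i = j
    · subst h; simp; ring
    · rw [if_neg h]
      have : (starRingEnd ℂ) (x j) * (M j i * x i)
          = (starRingEnd ℂ) ((starRingEnd ℂ) (x i) * (M i j * x j)) := by
        rw [map_mul, map_mul, RingHomCompTriple.comp_apply]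
        rw [hsym i j h]
        ring_nf
        simp [mul_comm, mul_assoc, mul_left_comm]
      simp only [hf, this, Complex.conj_im]
      ring
  have hdiagsum : ∑ i, f i i = 0 := by
    have h1 : (∑ i, ∑ j, f i j) + (∑ i, ∑ j, f j i) = ∑ i, ∑ j, (f i j + f j i) := by
      rw [← Finset.sum_add_distrib]
      apply Finset.sum_congr rfl
      intro i _
      rw [← Finset.sum_add_distrib]
    have h2 : (∑ i, ∑ j, (f j i : ℝ)) = ∑ i, ∑ j, f i j := Finset.sum_comm
    rw [h2, hS] at h1
    simp only [hpair] at h1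
    have h3 : ∑ i, ∑ j, (if i = j then 2 * f i i else 0 : ℝ) = ∑ i, 2 * f i i := by
      apply Finset.sum_congr rfl
      intro i _
      simp
    rw [h3, ← Finset.mul_sum] at h1
    linarith
  have hterm : ∀ i, f i i = Complex.normSq (x i) * (M i i).im := by
    intro i
    have h4 : (starRingEnd ℂ) (x i) * (M i i * x i) = (Complex.normSq (x i) : ℂ) * M i i := by
      rw [show (starRingEnd ℂ) (x i) * (M i i * x i)
          = ((starRingEnd ℂ) (x i) * x i) * M i i from by ring,
        ← Complex.normSq_eq_conj_mul_self]
    rw [hf]; simp only [h4]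
    simp [Complex.mul_im]
  obtain ⟨i0, hi0⟩ := Function.ne_iff.mp hx0
  have hneg : ∀ i, f i i ≤ 0 := by
    intro i
    rw [hterm]
    exact mul_nonpos_of_nonneg_of_nonpos (Complex.normSq_nonneg _) (le_of_lt (hdiag i))
  have := (Finset.sum_eq_zero_iff_of_nonpos (by intro i _; exact hneg i)).mp hdiagsum i0 (Finset.mem_univ _)
  rw [hterm] at this
  have hpos : 0 < Complex.normSq (x i0) := Complex.normSq_pos.mpr hi0
  nlinarith [hdiag i0]

lemma dist_eq_depth {V : Type*} (G : SimpleGraph V) (o : V) (φ : V → ℕ) (h0 : φ o = 0)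
    (hstep : ∀ x y, G.Adj x y → φ y ≤ φ x + 1)
    (hparent : ∀ x, x ≠ o → ∃ y, G.Adj y x ∧ φ x = φ y + 1) (x : V) :
    G.dist o x = φ x := by
  have hwalk : ∀ (n : ℕ) (x : V), φ x = n → ∃ w : G.Walk o x, w.length = n := by
    intro n
    induction n with
    | zero =>
      intro x hx
      by_cases h : x = o
      · subst h; exact ⟨SimpleGraph.Walk.nil, rfl⟩
      · obtain ⟨y, _, hy⟩ := hparent x h
        omega
    | succ n ih =>
      intro x hx
      have hxo : x ≠ o := by intro h; subst h; omega
      obtain ⟨y, hadj, hy⟩ := hparent x hxo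
      obtain ⟨w, hw⟩ := ih y (by omega)
      exact ⟨w.concat hadj, by rw [SimpleGraph.Walk.length_concat, hw]⟩
  obtain ⟨w, hw⟩ := hwalk (φ x) x rfl
  have hle : G.dist o x ≤ φ x := hw ▸ SimpleGraph.dist_le w
  have hlb : ∀ (u v : V) (p : G.Walk u v), φ v ≤ φ u + p.length := by
    intro u v p
    induction p with
    | nil => simp
    | @cons a b c h p ih =>
      have := hstep a b h
      rw [SimpleGraph.Walk.length_cons]
      omega
  have hr : G.Reachable o x := ⟨w⟩
  obtain ⟨p, hp⟩ := hr.exists_walk_length_eq_dist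
  have := hlb o x p
  omega

section YLemmas

variable {m ℓ : ℕ}

lemma adjY_iff (x y : TreeBallY m ℓ) :
    (treeGraphY m ℓ).Adj x y ↔
      (∃ a : Fin m, y.1 = x.1 ++ [a]) ∨ (∃ a : Fin m, x.1 = y.1 ++ [a]) := by
  show (SimpleGraph.fromRel _).Adj x y ↔ _
  rw [SimpleGraph.fromRel_adj]
  constructor
  · rintro ⟨-, h⟩; exact h
  · intro h
    refine ⟨?_, h⟩
    intro he
    rcases h with ⟨a, ha⟩ | ⟨a, ha⟩
    · rw [he] at ha; simp at ha
    · rw [he] at ha; simp at ha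

lemma distY (x : TreeBallY m ℓ) :
    (treeGraphY m ℓ).dist (rootY m ℓ) x = x.1.length := by
  apply dist_eq_depth (treeGraphY m ℓ) (rootY m ℓ) (fun x => x.1.length) rfl
  · intro x y hadj
    rcases (adjY_iff x y).mp hadj with ⟨a, ha⟩ | ⟨a, ha⟩
    · have := congrArg List.length ha
      simp only [List.length_append, List.length_singleton] at this
      omega
    · have := congrArg List.length ha
      simp only [List.length_append, List.length_singleton] at this
      omega
  · intro x hx
    have hne : x.1 ≠ [] := fun h => hx (Subtype.ext h)
    have hlen : 0 < x.1.length := List.length_pos_iff.mpr hne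
    refine ⟨⟨x.1.dropLast, le_trans (by rw [List.length_dropLast]; omega) x.2⟩, ?_, ?_⟩
    · erw [adjY_iff]
      exact Or.inl ⟨x.1.getLast hne, (List.dropLast_append_getLast hne).symm⟩
    · simp only [List.length_dropLast]
      omega

lemma sumY (x : TreeBallY m ℓ) (g : ℕ → ℂ) :
    (∑ y : TreeBallY m ℓ, if (treeGraphY m ℓ).Adj x y then g y.1.length else 0)
      = (if x.1.length = 0 then 0 else g (x.1.length - 1))
        + (if x.1.length < ℓ then (m : ℂ) * g (x.1.length + 1) else 0) := by
  have hsplit : ∀ y : TreeBallY m ℓ,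
      (if (treeGraphY m ℓ).Adj x y then g y.1.length else 0)
        = (if ∃ a : Fin m, x.1 = y.1 ++ [a] then g y.1.length else 0)
          + (if ∃ a : Fin m, y.1 = x.1 ++ [a] then g y.1.length else 0) := by
    intro y
    by_cases h1 : ∃ a : Fin m, x.1 = y.1 ++ [a] <;>
      by_cases h2 : ∃ a : Fin m, y.1 = x.1 ++ [a]
    · obtain ⟨a, ha⟩ := h1; obtain ⟨b, hb⟩ := h2
      rw [hb] at ha
      have := congrArg List.length ha
      simp only [List.length_append, List.length_singleton] at this
      omega
    all_goals simp [adjY_iff, h1, h2]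
  rw [Finset.sum_congr rfl (fun y _ => hsplit y), Finset.sum_add_distrib]
  congr 1
  · -- parent part
    by_cases hne : x.1 = []
    · rw [Finset.sum_eq_zero, if_pos (by rw [hne]; rfl)]
      intro y _
      rw [if_neg]
      rintro ⟨a, ha⟩
      rw [hne] at ha
      have := congrArg List.length ha
      simp at this
    · have hlen : 0 < x.1.length := List.length_pos_iff.mpr hne
      rw [if_neg (by omega)]
      set px : TreeBallY m ℓ :=
        ⟨x.1.dropLast, le_trans (by rw [List.length_dropLast]; omega) x.2⟩ with hpx
      have hcond : ∀ y : TreeBallY m ℓ, (∃ a : Fin m, x.1 = y.1 ++ [a]) ↔ y = px := by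
        intro y
        constructor
        · rintro ⟨a, ha⟩
          apply Subtype.ext
          rw [hpx]
          simp only
          rw [ha, List.dropLast_concat]
        · rintro rfl
          exact ⟨x.1.getLast hne, (List.dropLast_append_getLast hne).symm⟩
      have h1 : (∑ y : TreeBallY m ℓ, if ∃ a : Fin m, x.1 = y.1 ++ [a] then g y.1.length else 0)
          = ∑ y : TreeBallY m ℓ, if y = px then g y.1.length else 0 :=
        Finset.sum_congr rfl (fun y _ => if_congr (hcond y) rfl rfl)
      rw [h1, Finset.sum_ite_eq' Finset.univ px (fun y => g y.1.length),
        if_pos (Finset.mem_univ px)]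
      rw [hpx]
      simp only [List.length_dropLast]
  · -- children part
    by_cases hlt : x.1.length < ℓ
    · rw [if_pos hlt]
      set c : Fin m → TreeBallY m ℓ :=
        fun a => ⟨x.1 ++ [a], by rw [List.length_append, List.length_singleton]; omega⟩ with hc
      have hinj : Function.Injective c := by
        intro a b hab
        have h := congrArg Subtype.val hab
        simp only [hc] at h
        exact List.singleton_injective (List.append_cancel_left h)
      have hcond : ∀ y : TreeBallY m ℓ, (∃ a : Fin m, y.1 = x.1 ++ [a]) ↔ ∃ a, y = c a := by
        intro y
        constructor
        · rintro ⟨a, ha⟩; exact ⟨a, Subtype.ext ha⟩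
        · rintro ⟨a, rfl⟩; exact ⟨a, rfl⟩
      have hlenc : ∀ a : Fin m, (c a).1.length = x.1.length + 1 := by
        intro a
        simp only [hc, List.length_append, List.length_singleton]
      calc (∑ y : TreeBallY m ℓ, if ∃ a : Fin m, y.1 = x.1 ++ [a] then g y.1.length else 0)
          = ∑ y : TreeBallY m ℓ, ∑ a : Fin m, if y = c a then g y.1.length else 0 := by
            apply Finset.sum_congr rfl
            intro y _
            by_cases h : ∃ a : Fin m, y.1 = x.1 ++ [a]
            · obtain ⟨a0, hy⟩ := (hcond y).mp h
              subst hy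
              rw [if_pos h, Finset.sum_eq_single a0]
              · rw [if_pos rfl]
              · intro b _ hb
                rw [if_neg (fun hcb => hb (hinj hcb).symm)]
              · intro hz; exact absurd (Finset.mem_univ a0) hz
            · rw [if_neg h, Finset.sum_eq_zero]
              intro a _
              rw [if_neg]
              intro hy
              exact h ((hcond y).mpr ⟨a, hy⟩)
        _ = ∑ a : Fin m, ∑ y : TreeBallY m ℓ, if y = c a then g y.1.length else 0 :=
            Finset.sum_comm
        _ = ∑ a : Fin m, g (x.1.length + 1) := by
            apply Finset.sum_congr rfl
            intro a _
            rw [Finset.sum_ite_eq' Finset.univ (c a) (fun y => g y.1.length),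
              if_pos (Finset.mem_univ _), hlenc a]
        _ = (m : ℂ) * g (x.1.length + 1) := by
            rw [Finset.sum_const, Finset.card_univ, Fintype.card_fin, nsmul_eq_mul]
    · rw [if_neg hlt, Finset.sum_eq_zero]
      intro y _
      rw [if_neg]
      rintro ⟨a, ha⟩
      have h := congrArg List.length ha
      simp only [List.length_append, List.length_singleton] at h
      have := y.2
      omega

end YLemmas

section XLemmas

variable {d ℓ : ℕ}

/-- depth in the `d`-regular ball -/
def depthX : TreeBallX d ℓ → ℕ
  | none => 0
  | some p => p.2.1.length + 1

def emptyY (m ℓ : ℕ) : TreeBallY m ℓ := ⟨[], Nat.zero_le _⟩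

lemma neX (p : Fin d × TreeBallY (d - 1) (ℓ - 1)) : rootX d ℓ ≠ some p := by
  show (none : Option _) ≠ some p
  exact (Option.some_ne_none p).symm

lemma someXinj {a a' : Fin d} {w w' : TreeBallY (d - 1) (ℓ - 1)}
    (h : (some (a, w) : TreeBallX d ℓ) = some (a', w')) : a = a' ∧ w = w' := by
  have h2 := Option.some.inj h
  exact ⟨congrArg Prod.fst h2, congrArg Prod.snd h2⟩

lemma casesX (x : TreeBallX d ℓ) :
    x = rootX d ℓ ∨ ∃ (a : Fin d) (w : TreeBallY (d - 1) (ℓ - 1)), x = some (a, w) := by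
  rcases x with _ | ⟨a, w⟩
  · exact Or.inl rfl
  · exact Or.inr ⟨a, w, rfl⟩

lemma adjX_root_iff (y : TreeBallX d ℓ) :
    (treeGraphX d ℓ).Adj (rootX d ℓ) y ↔ ∃ a : Fin d, y = some (a, emptyY (d - 1) (ℓ - 1)) := by
  show (SimpleGraph.fromRel _).Adj _ _ ↔ _
  rw [SimpleGraph.fromRel_adj]
  constructor
  · rintro ⟨hne, h | h⟩
    · rcases h with ⟨a, -, rfl⟩ | ⟨a, s, t, h, -⟩
      · exact ⟨a, rfl⟩
      · exact absurd h (neX _)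
    · rcases h with ⟨a, -, h⟩ | ⟨a, s, t, -, h, -⟩
      · exact absurd h (neX _)
      · exact absurd h (neX _)
  · rintro ⟨a, rfl⟩
    exact ⟨neX _, Or.inl (Or.inl ⟨a, rfl, rfl⟩)⟩

lemma adjX_some_iff (a : Fin d) (w : TreeBallY (d - 1) (ℓ - 1)) (y : TreeBallX d ℓ) :
    (treeGraphX d ℓ).Adj (some (a, w)) y ↔
      (w.1 = [] ∧ y = rootX d ℓ) ∨
      (∃ t : TreeBallY (d - 1) (ℓ - 1), y = some (a, t) ∧ ∃ b : Fin (d - 1), w.1 = t.1 ++ [b]) ∨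
      (∃ t : TreeBallY (d - 1) (ℓ - 1), y = some (a, t) ∧ ∃ b : Fin (d - 1), t.1 = w.1 ++ [b]) := by
  show (SimpleGraph.fromRel _).Adj _ _ ↔ _
  erw [SimpleGraph.fromRel_adj]
  constructor
  · rintro ⟨hne, h | h⟩
    · rcases h with ⟨a', h, -⟩ | ⟨a', s, t, h1, h2, b, hb⟩
      · exact absurd h.symm (neX _)
      · obtain ⟨ha', hs⟩ := someXinj h1
        subst ha'; subst hs
        exact Or.inr (Or.inr ⟨t, h2, b, hb⟩)
    · rcases h with ⟨a', rfl, h⟩ | ⟨a', s, t, h1, h2, b, hb⟩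
      · obtain ⟨ha', hw⟩ := someXinj h
        exact Or.inl ⟨by rw [hw], rfl⟩
      · obtain ⟨ha', ht'⟩ := someXinj h2
        subst ha'; subst ht'
        exact Or.inr (Or.inl ⟨s, h1, b, hb⟩)
  · intro h
    constructor
    · intro he
      rcases h with ⟨h1, h2⟩ | ⟨t, ht, b, hb⟩ | ⟨t, ht, b, hb⟩
      · rw [h2] at he; exact absurd he.symm (neX _)
      · rw [ht] at he
        have hwt := (someXinj he).2
        rw [← hwt] at hb
        have := congrArg List.length hb
        simp at this
      · rw [ht] at he
        have hwt := (someXinj he).2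
        rw [← hwt] at hb
        have := congrArg List.length hb
        simp at this
    · rcases h with ⟨h1, h2⟩ | ⟨t, ht, b, hb⟩ | ⟨t, ht, b, hb⟩
      · refine Or.inr (Or.inl ⟨a, h2 ▸ rfl, ?_⟩)
        rw [show w = emptyY (d-1) (ℓ-1) from Subtype.ext h1]
        rfl
      · exact Or.inr (Or.inr ⟨a, t, w, ht ▸ rfl, rfl, b, hb⟩)
      · exact Or.inl (Or.inr ⟨a, w, t, rfl, ht ▸ rfl, b, hb⟩)

lemma distX (hℓ : 1 ≤ ℓ) (x : TreeBallX d ℓ) :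
    (treeGraphX d ℓ).dist (rootX d ℓ) x = depthX x := by
  apply dist_eq_depth (treeGraphX d ℓ) (rootX d ℓ) depthX rfl
  · intro x y hadj
    rcases casesX x with rfl | ⟨a, w, rfl⟩
    · obtain ⟨b, rfl⟩ := (adjX_root_iff y).mp hadj
      simp [depthX, emptyY]
    · rcases (adjX_some_iff a w y).mp hadj with ⟨h1, rfl⟩ | ⟨t, rfl, b, hb⟩ | ⟨t, rfl, b, hb⟩
      · simp [depthX, rootX]
      · have := congrArg List.length hb
        simp only [List.length_append, List.length_singleton] at this
        simp only [depthX]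
        omega
      · have := congrArg List.length hb
        simp only [List.length_append, List.length_singleton] at this
        simp only [depthX]
        omega
  · intro x hx
    rcases casesX x with rfl | ⟨a, w, rfl⟩
    · exact absurd rfl hx
    · by_cases hw : w.1 = []
      · refine ⟨rootX d ℓ, ?_, ?_⟩
        · exact ((adjX_some_iff a w _).mpr (Or.inl ⟨hw, rfl⟩)).symm
        · simp [depthX, rootX, hw]
      · have hlen : 0 < w.1.length := List.length_pos_iff.mpr hw
        refine ⟨some (a, ⟨w.1.dropLast, le_trans (by rw [List.length_dropLast]; omega) w.2⟩),
          ?_, ?_⟩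
        · refine ((adjX_some_iff a w _).mpr (Or.inr (Or.inl ⟨_, rfl, w.1.getLast hw, ?_⟩))).symm
          exact (List.dropLast_append_getLast hw).symm
        · simp only [depthX, List.length_dropLast]
          omega

lemma sumX_root (g : ℕ → ℂ) :
    (∑ y : TreeBallX d ℓ, if (treeGraphX d ℓ).Adj (rootX d ℓ) y then g (depthX y) else 0)
      = (d : ℂ) * g 1 := by
  set c : Fin d → TreeBallX d ℓ := fun a => some (a, emptyY (d - 1) (ℓ - 1)) with hc
  have hinj : Function.Injective c := by
    intro a b hab
    exact (someXinj hab).1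
  have hcond : ∀ y : TreeBallX d ℓ,
      (treeGraphX d ℓ).Adj (rootX d ℓ) y ↔ ∃ a, y = c a := adjX_root_iff
  calc (∑ y : TreeBallX d ℓ, if (treeGraphX d ℓ).Adj (rootX d ℓ) y then g (depthX y) else 0)
      = ∑ y : TreeBallX d ℓ, ∑ a : Fin d, if y = c a then g (depthX y) else 0 := by
        apply Finset.sum_congr rfl
        intro y _
        by_cases h : (treeGraphX d ℓ).Adj (rootX d ℓ) y
        · obtain ⟨a0, hy⟩ := (hcond y).mp h
          subst hy
          rw [if_pos h, Finset.sum_eq_single a0]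
          · rw [if_pos rfl]
          · intro b _ hb
            rw [if_neg (fun hcb => hb (hinj hcb).symm)]
          · intro hz; exact absurd (Finset.mem_univ a0) hz
        · rw [if_neg h, Finset.sum_eq_zero]
          intro a _
          rw [if_neg]
          intro hy
          exact h ((hcond y).mpr ⟨a, hy⟩)
    _ = ∑ a : Fin d, ∑ y : TreeBallX d ℓ, if y = c a then g (depthX y) else 0 :=
        Finset.sum_comm
    _ = ∑ a : Fin d, g 1 := by
        apply Finset.sum_congr rfl
        intro a _
        rw [Finset.sum_ite_eq' Finset.univ (c a) (fun y => g (depthX y)),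
          if_pos (Finset.mem_univ _)]
        simp [hc, depthX, emptyY]
    _ = (d : ℂ) * g 1 := by
        rw [Finset.sum_const, Finset.card_univ, Fintype.card_fin, nsmul_eq_mul]

lemma sumX_some (a : Fin d) (w : TreeBallY (d - 1) (ℓ - 1)) (g : ℕ → ℂ) :
    (∑ y : TreeBallX d ℓ, if (treeGraphX d ℓ).Adj (some (a, w)) y then g (depthX y) else 0)
      = g w.1.length
        + (if w.1.length < ℓ - 1 then ((d - 1 : ℕ) : ℂ) * g (w.1.length + 2) else 0) := by
  have hADJ : ∀ y : TreeBallX d ℓ, (treeGraphX d ℓ).Adj (some (a, w)) y ↔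
      (((w.1 = [] ∧ y = rootX d ℓ) ∨
        (∃ t : TreeBallY (d - 1) (ℓ - 1), y = some (a, t) ∧
          ∃ b : Fin (d - 1), w.1 = t.1 ++ [b])) ∨
       (∃ t : TreeBallY (d - 1) (ℓ - 1), y = some (a, t) ∧
          ∃ b : Fin (d - 1), t.1 = w.1 ++ [b])) := by
    intro y
    rw [adjX_some_iff, ← or_assoc]
  have hsplit : ∀ y : TreeBallX d ℓ,
      (if (treeGraphX d ℓ).Adj (some (a, w)) y then g (depthX y) else 0)
        = (if (w.1 = [] ∧ y = rootX d ℓ) ∨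
              (∃ t : TreeBallY (d - 1) (ℓ - 1), y = some (a, t) ∧
                ∃ b : Fin (d - 1), w.1 = t.1 ++ [b]) then g (depthX y) else 0)
          + (if ∃ t : TreeBallY (d - 1) (ℓ - 1), y = some (a, t) ∧
                ∃ b : Fin (d - 1), t.1 = w.1 ++ [b] then g (depthX y) else 0) := by
    intro y
    by_cases h1 : (w.1 = [] ∧ y = rootX d ℓ) ∨
        (∃ t : TreeBallY (d - 1) (ℓ - 1), y = some (a, t) ∧
          ∃ b : Fin (d - 1), w.1 = t.1 ++ [b]) <;>
      by_cases h2 : ∃ t : TreeBallY (d - 1) (ℓ - 1), y = some (a, t) ∧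
          ∃ b : Fin (d - 1), t.1 = w.1 ++ [b]
    · exfalso
      obtain ⟨t, rfl, b, hb⟩ := h2
      rcases h1 with ⟨-, h⟩ | ⟨t', ht', b', hb'⟩
      · exact absurd h.symm (neX _)
      · have hwt := (someXinj ht').2
        rw [← hwt] at hb'
        rw [hb] at hb'
        have := congrArg List.length hb'
        simp only [List.length_append, List.length_singleton] at this
        omega
    · rw [if_pos ((hADJ y).mpr (Or.inl h1)), if_pos h1, if_neg h2, add_zero]
    · rw [if_pos ((hADJ y).mpr (Or.inr h2)), if_neg h1, if_pos h2, zero_add]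
    · rw [if_neg (fun h => Or.elim ((hADJ y).mp h) h1 h2), if_neg h1, if_neg h2, add_zero]
  rw [Finset.sum_congr rfl (fun y _ => hsplit y), Finset.sum_add_distrib]
  congr 1
  · -- parent part
    by_cases hw : w.1 = []
    · have hcond : ∀ y : TreeBallX d ℓ, ((w.1 = [] ∧ y = rootX d ℓ) ∨
          (∃ t : TreeBallY (d - 1) (ℓ - 1), y = some (a, t) ∧
            ∃ b : Fin (d - 1), w.1 = t.1 ++ [b])) ↔ y = rootX d ℓ := by
        intro y
        constructor
        · rintro (⟨-, h⟩ | ⟨t, rfl, b, hb⟩)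
          · exact h
          · rw [hw] at hb
            have := congrArg List.length hb
            simp at this
        · intro h; exact Or.inl ⟨hw, h⟩
      rw [Finset.sum_congr rfl (fun y _ => if_congr (hcond y) rfl rfl),
        Finset.sum_ite_eq' Finset.univ (rootX d ℓ) (fun y => g (depthX y)),
        if_pos (Finset.mem_univ _)]
      rw [hw]
      rfl
    · have hlen : 0 < w.1.length := List.length_pos_iff.mpr hw
      set pw : TreeBallY (d - 1) (ℓ - 1) :=
        ⟨w.1.dropLast, le_trans (by rw [List.length_dropLast]; omega) w.2⟩ with hpw
      have hcond : ∀ y : TreeBallX d ℓ, ((w.1 = [] ∧ y = rootX d ℓ) ∨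
          (∃ t : TreeBallY (d - 1) (ℓ - 1), y = some (a, t) ∧
            ∃ b : Fin (d - 1), w.1 = t.1 ++ [b])) ↔ y = some (a, pw) := by
        intro y
        constructor
        · rintro (⟨h, -⟩ | ⟨t, rfl, b, hb⟩)
          · exact absurd h hw
          · congr 1
            have ht : t = pw := by
              apply Subtype.ext
              rw [hpw]
              simp only
              rw [hb, List.dropLast_concat]
            rw [ht]
        · rintro rfl
          exact Or.inr ⟨pw, rfl, w.1.getLast hw,
            by rw [hpw]; exact (List.dropLast_append_getLast hw).symm⟩
      have hs := Finset.sum_ite_eq' (Finset.univ : Finset (TreeBallX d ℓ))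
        ((some (a, pw)) : TreeBallX d ℓ) (fun y => g (depthX y))
      erw [if_pos (Finset.mem_univ _)] at hs
      erw [Finset.sum_congr rfl (fun y _ => if_congr (hcond y) rfl rfl)]
      convert hs using 3
      simp only [depthX, hpw, List.length_dropLast]
      congr 1
      omega
  · -- children part
    by_cases hlt : w.1.length < ℓ - 1
    · rw [if_pos hlt]
      set c : Fin (d - 1) → TreeBallX d ℓ :=
        fun b => some (a, ⟨w.1 ++ [b], by rw [List.length_append, List.length_singleton]; omega⟩)
        with hc
      have hinj : Function.Injective c := by
        intro b1 b2 hb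
        have h := (someXinj hb).2
        have h' := congrArg Subtype.val h
        simp only at h'
        exact List.singleton_injective (List.append_cancel_left h')
      have hcond : ∀ y : TreeBallX d ℓ,
          (∃ t : TreeBallY (d - 1) (ℓ - 1), y = some (a, t) ∧
            ∃ b : Fin (d - 1), t.1 = w.1 ++ [b]) ↔ ∃ b, y = c b := by
        intro y
        constructor
        · rintro ⟨t, rfl, b, hb⟩
          exact ⟨b, by rw [hc]; congr 1; exact congrArg _ (Subtype.ext hb)⟩
        · rintro ⟨b, rfl⟩
          exact ⟨_, rfl, b, rfl⟩
      calc (∑ y : TreeBallX d ℓ, if ∃ t : TreeBallY (d - 1) (ℓ - 1), y = some (a, t) ∧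
              ∃ b : Fin (d - 1), t.1 = w.1 ++ [b] then g (depthX y) else 0)
          = ∑ y : TreeBallX d ℓ, ∑ b : Fin (d - 1), if y = c b then g (depthX y) else 0 := by
            apply Finset.sum_congr rfl
            intro y _
            by_cases h : ∃ t : TreeBallY (d - 1) (ℓ - 1), y = some (a, t) ∧
                ∃ b : Fin (d - 1), t.1 = w.1 ++ [b]
            · obtain ⟨b0, hy⟩ := (hcond y).mp h
              subst hy
              rw [if_pos h, Finset.sum_eq_single b0]
              · rw [if_pos rfl]
              · intro b _ hb
                rw [if_neg (fun hcb => hb (hinj hcb).symm)]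
              · intro hz; exact absurd (Finset.mem_univ b0) hz
            · rw [if_neg h, Finset.sum_eq_zero]
              intro b _
              rw [if_neg]
              intro hy
              exact h ((hcond y).mpr ⟨b, hy⟩)
        _ = ∑ b : Fin (d - 1), ∑ y : TreeBallX d ℓ, if y = c b then g (depthX y) else 0 :=
            Finset.sum_comm
        _ = ∑ b : Fin (d - 1), g (w.1.length + 2) := by
            apply Finset.sum_congr rfl
            intro b _
            rw [Finset.sum_ite_eq' Finset.univ (c b) (fun y => g (depthX y)),
              if_pos (Finset.mem_univ _)]
            simp only [hc, depthX, List.length_append, List.length_singleton]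
        _ = ((d - 1 : ℕ) : ℂ) * g (w.1.length + 2) := by
            rw [Finset.sum_const, Finset.card_univ, Fintype.card_fin, nsmul_eq_mul]
    · rw [if_neg hlt, Finset.sum_eq_zero]
      intro y _
      rw [if_neg]
      rintro ⟨t, rfl, b, hb⟩
      have h := congrArg List.length hb
      simp only [List.length_append, List.length_singleton] at h
      have := t.2
      omega

end XLemmas

section MainProof

lemma aux_rootX (K msc z dc β : ℂ) (hK0 : K ≠ 0) (hK2 : K ^ 2 = dc - 1) (hβ0 : β ≠ 0)
    (hdm1 : dc - 1 ≠ 0) (hβ : β = -z - dc / (dc - 1) * msc) :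
    dc * (K⁻¹ * (β⁻¹ * (-msc * K⁻¹) ^ 1)) - z * (β⁻¹ * (-msc * K⁻¹) ^ 0) - 0 = 1 := by
  have h1 : dc * (K⁻¹ * (β⁻¹ * (-msc * K⁻¹) ^ 1)) - z * (β⁻¹ * (-msc * K⁻¹) ^ 0) - 0
      = β⁻¹ * (-z - dc / (dc - 1) * msc) := by
    field_simp
    linear_combination (dc * msc) * hK2
  rw [h1, ← hβ, inv_mul_cancel₀ hβ0]

set_option maxHeartbeats 400000 in
/-- **Fixed point property.** Fix `d ≥ 3`, `ℓ ≥ 1`, `z ∈ ℂ` with `Im z > 0`, and let `m_sc(z)`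
be the unique root of `m² + z m + 1 = 0` with positive imaginary part and
`m_d(z) = 1/(-z - (d/(d-1)) m_sc(z))`. With
`Y_ℓ(Δ,z) := ((H_{𝒴_ℓ} - z·I - Δ·𝕀∂)⁻¹)_{oo}` and
`X_ℓ(Δ,z) := ((H_{𝒳_ℓ} - z·I - Δ·𝕀∂)⁻¹)_{oo}`, one has
`Y_ℓ(m_sc(z), z) = m_sc(z)` and `X_ℓ(m_sc(z), z) = m_d(z)`. -/
theorem msc_fixed_point (d ℓ : ℕ) (hd : 3 ≤ d) (hℓ : 1 ≤ ℓ)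
    (z msc : ℂ) (hz : 0 < z.im)
    (hmsc : msc ^ 2 + z * msc + 1 = 0) (him : 0 < msc.im) :
    ((HmatY d ℓ - z • 1 - msc • IbdY d ℓ)⁻¹) (rootY (d - 1) ℓ) (rootY (d - 1) ℓ) = msc ∧
    ((HmatX d ℓ - z • 1 - msc • IbdX d ℓ)⁻¹) (rootX d ℓ) (rootX d ℓ) =
      (-z - ((d : ℂ) / ((d : ℂ) - 1)) * msc)⁻¹ := by
  classical
  have hd1 : (1 : ℕ) ≤ d := by omega
  have hdr : (3 : ℝ) ≤ (d : ℝ) := by exact_mod_cast hd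
  set Kr : ℝ := Real.sqrt ((d : ℝ) - 1) with hKrdef
  set K : ℂ := (Kr : ℂ) with hKdef
  have hKrpos : 0 < Kr := Real.sqrt_pos.mpr (by linarith)
  have hK0 : K ≠ 0 := Complex.ofReal_ne_zero.mpr (ne_of_gt hKrpos)
  have hK2 : K ^ 2 = (d : ℂ) - 1 := by
    rw [hKdef, ← Complex.ofReal_pow, hKrdef, Real.sq_sqrt (by linarith)]
    push_cast
    ring
  have hcast : ((d - 1 : ℕ) : ℂ) = (d : ℂ) - 1 := by
    rw [Nat.cast_sub hd1, Nat.cast_one]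
  set r : ℂ := -msc * K⁻¹ with hrdef
  have hrow : ∀ (c : ℂ) (n : ℕ), K⁻¹ * (c * r ^ n)
      + ((d : ℂ) - 1) * (K⁻¹ * (c * r ^ (n + 2))) - z * (c * r ^ (n + 1)) = 0 := by
    intro c n
    rw [hrdef, ← hK2]
    linear_combination (c * (-msc * K⁻¹) ^ n * K⁻¹) * hmsc
      + (c * (-msc * K⁻¹) ^ n * msc ^ 2 * K⁻¹ * (K * K⁻¹ + 1)) * (mul_inv_cancel₀ hK0)
  have hleaf : ∀ (c : ℂ) (n : ℕ), K⁻¹ * (c * r ^ n)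
      - z * (c * r ^ (n + 1)) - msc * (c * r ^ (n + 1)) = 0 := by
    intro c n
    rw [hrdef]
    linear_combination (c * (-msc * K⁻¹) ^ n * K⁻¹) * hmsc
  -- ====================== Y part ======================
  set MY := HmatY d ℓ - z • (1 : Matrix (TreeBallY (d-1) ℓ) (TreeBallY (d-1) ℓ) ℂ)
      - msc • IbdY d ℓ with hMY
  have hMYapp : ∀ x y : TreeBallY (d - 1) ℓ, MY x y
      = (if (treeGraphY (d - 1) ℓ).Adj x y then K⁻¹ else 0)
        - (if x = y then z else 0) - (if x = y ∧ x.1.length = ℓ then msc else 0) := by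
    intro x y
    rw [hMY]
    simp only [Matrix.sub_apply, Matrix.smul_apply, smul_eq_mul, Matrix.one_apply, IbdY,
      Matrix.diagonal_apply, HmatY, distY, hKdef, ite_and]
    by_cases h1 : x = y
    · subst h1
      simp only [if_pos rfl]
      split_ifs <;> ring
    · simp only [if_neg h1]
      ring
  have hsymY : ∀ i j, i ≠ j → (starRingEnd ℂ) (MY i j) = MY j i := by
    intro i j hij
    rw [hMYapp i j, hMYapp j i, if_neg hij, if_neg (Ne.symm hij),
      if_neg (show ¬(i = j ∧ i.1.length = ℓ) from fun h => hij h.1),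
      if_neg (show ¬(j = i ∧ j.1.length = ℓ) from fun h => hij h.1.symm)]
    have hadj : (treeGraphY (d - 1) ℓ).Adj j i ↔ (treeGraphY (d - 1) ℓ).Adj i j :=
      (treeGraphY (d - 1) ℓ).adj_comm j i
    rw [if_congr hadj rfl rfl]
    split_ifs with h
    · simp [hKdef, ← Complex.ofReal_inv, Complex.conj_ofReal]
    · simp
  have hdiagY : ∀ i, (MY i i).im < 0 := by
    intro i
    rw [hMYapp i i, if_neg (SimpleGraph.irrefl _), if_pos rfl]
    split_ifs with h <;>
      simp only [Complex.sub_im, Complex.zero_im] <;> linarith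
  have hdetY : IsUnit MY.det := aux_det_ne_zero MY hsymY hdiagY
  set vY : TreeBallY (d - 1) ℓ → ℂ := fun y => msc * r ^ y.1.length with hvY
  have hmulY : MY.mulVec vY = Pi.single (rootY (d - 1) ℓ) 1 := by
    funext x
    have hstart : MY.mulVec vY x = ∑ y, MY x y * vY y := rfl
    rw [hstart]
    have hexp : ∀ y, MY x y * vY y
        = (if (treeGraphY (d - 1) ℓ).Adj x y then K⁻¹ * (msc * r ^ y.1.length) else 0)
          - (if x = y then z * vY y else 0)
          - (if x = y then (if x.1.length = ℓ then msc * vY y else 0) else 0) := by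
      intro y
      rw [hMYapp, ite_and]
      simp only [hvY]
      split_ifs <;> ring
    rw [Finset.sum_congr rfl (fun y _ => hexp y), Finset.sum_sub_distrib,
      Finset.sum_sub_distrib, sumY x (fun n => K⁻¹ * (msc * r ^ n)),
      Finset.sum_ite_eq Finset.univ x (fun y => z * vY y), if_pos (Finset.mem_univ _),
      Finset.sum_ite_eq Finset.univ x
        (fun y => if x.1.length = ℓ then msc * vY y else 0), if_pos (Finset.mem_univ _)]
    have hroot : (x = rootY (d - 1) ℓ) ↔ x.1.length = 0 := by
      erw [show (rootY (d - 1) ℓ) = ⟨[], Nat.zero_le _⟩ from rfl, Subtype.ext_iff,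
        List.length_eq_zero_iff]
    rw [Pi.single_apply, if_congr hroot rfl rfl]
    simp only [hvY]
    have hkle : x.1.length ≤ ℓ := x.2
    by_cases hk0 : x.1.length = 0
    · rw [if_pos hk0, if_pos hk0, if_pos (by omega), if_neg (by omega), hk0]
      rw [hcast, hrdef, ← hK2]
      linear_combination (-1 : ℂ) * hmsc - msc ^ 2 * (K * K⁻¹ + 1) * (mul_inv_cancel₀ hK0)
    · rw [if_neg hk0]
      by_cases hkl : x.1.length < ℓ
      · rw [if_pos hkl, if_neg hk0, if_neg (by omega), hcast]
        obtain ⟨n, hn⟩ : ∃ n, x.1.length = n + 1 := ⟨x.1.length - 1, by omega⟩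
        rw [hn]
        simp only [Nat.add_sub_cancel]
        linear_combination hrow msc n
      · have hkeq : x.1.length = ℓ := by omega
        rw [if_neg hkl, if_neg hk0, if_pos hkeq, hkeq]
        obtain ⟨n, hn⟩ : ∃ n, ℓ = n + 1 := ⟨ℓ - 1, by omega⟩
        rw [hn]
        simp only [Nat.add_sub_cancel]
        linear_combination hleaf msc n
  have resY : MY⁻¹ (rootY (d - 1) ℓ) (rootY (d - 1) ℓ) = msc := by
    rw [aux_inv_entry MY hdetY vY _ hmulY]
    simp [hvY, rootY]
  -- ====================== X part ======================
  set β : ℂ := -z - ((d : ℂ) / ((d : ℂ) - 1)) * msc with hβdef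
  have hdm1 : ((d : ℂ) - 1) ≠ 0 := by
    rw [← hcast]
    exact_mod_cast (by omega : d - 1 ≠ 0)
  have hβim : β.im < 0 := by
    have hq : ((d : ℂ) / ((d : ℂ) - 1)) = (((d : ℝ) / ((d : ℝ) - 1) : ℝ) : ℂ) := by
      push_cast
      ring
    have hqpos : 0 < (d : ℝ) / ((d : ℝ) - 1) := by
      apply div_pos <;> linarith
    rw [hβdef, hq]
    simp only [Complex.sub_im, Complex.neg_im, Complex.mul_im, Complex.ofReal_im,
      Complex.ofReal_re, zero_mul, add_zero]
    nlinarith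
  have hβ0 : β ≠ 0 := by
    intro h
    rw [h] at hβim
    simp at hβim
  set MX := HmatX d ℓ - z • (1 : Matrix (TreeBallX d ℓ) (TreeBallX d ℓ) ℂ)
      - msc • IbdX d ℓ with hMX
  have hMXapp : ∀ x y : TreeBallX d ℓ, MX x y
      = (if (treeGraphX d ℓ).Adj x y then K⁻¹ else 0)
        - (if x = y then z else 0) - (if x = y ∧ depthX x = ℓ then msc else 0) := by
    intro x y
    rw [hMX]
    simp only [Matrix.sub_apply, Matrix.smul_apply, smul_eq_mul, Matrix.one_apply, IbdX,
      Matrix.diagonal_apply, HmatX, distX hℓ, hKdef, ite_and]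
    by_cases h1 : x = y
    · subst h1
      simp only [if_pos rfl]
      split_ifs <;> ring
    · simp only [if_neg h1]
      ring
  have hsymX : ∀ i j, i ≠ j → (starRingEnd ℂ) (MX i j) = MX j i := by
    intro i j hij
    rw [hMXapp i j, hMXapp j i, if_neg hij, if_neg (Ne.symm hij),
      if_neg (show ¬(i = j ∧ depthX i = ℓ) from fun h => hij h.1),
      if_neg (show ¬(j = i ∧ depthX j = ℓ) from fun h => hij h.1.symm)]
    have hadj : (treeGraphX d ℓ).Adj j i ↔ (treeGraphX d ℓ).Adj i j :=
      (treeGraphX d ℓ).adj_comm j i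
    rw [if_congr hadj rfl rfl]
    split_ifs with h
    · simp [hKdef, ← Complex.ofReal_inv, Complex.conj_ofReal]
    · simp
  have hdiagX : ∀ i, (MX i i).im < 0 := by
    intro i
    rw [hMXapp i i, if_neg (SimpleGraph.irrefl _), if_pos rfl]
    split_ifs with h <;>
      simp only [Complex.sub_im, Complex.zero_im] <;> linarith
  have hdetX : IsUnit MX.det := aux_det_ne_zero MX hsymX hdiagX
  set vX : TreeBallX d ℓ → ℂ := fun x => β⁻¹ * r ^ depthX x with hvX
  have hmulX : MX.mulVec vX = Pi.single (rootX d ℓ) 1 := by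
    funext x
    have hstart : MX.mulVec vX x = ∑ y, MX x y * vX y := rfl
    rw [hstart]
    have hexp : ∀ y, MX x y * vX y
        = (if (treeGraphX d ℓ).Adj x y then K⁻¹ * (β⁻¹ * r ^ depthX y) else 0)
          - (if x = y then z * vX y else 0)
          - (if x = y then (if depthX x = ℓ then msc * vX y else 0) else 0) := by
      intro y
      rw [hMXapp, ite_and]
      simp only [hvX]
      split_ifs <;> ring
    rw [Finset.sum_congr rfl (fun y _ => hexp y), Finset.sum_sub_distrib,
      Finset.sum_sub_distrib,
      Finset.sum_ite_eq Finset.univ x (fun y => z * vX y), if_pos (Finset.mem_univ _),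
      Finset.sum_ite_eq Finset.univ x
        (fun y => if depthX x = ℓ then msc * vX y else 0), if_pos (Finset.mem_univ _)]
    rw [Pi.single_apply]
    rcases casesX x with rfl | ⟨a, w, rfl⟩
    · rw [sumX_root (fun n => K⁻¹ * (β⁻¹ * r ^ n))]
      rw [if_pos rfl]
      have : depthX (rootX d ℓ) = 0 := rfl
      rw [this, if_neg (by omega)]
      rw [show vX (rootX d ℓ) = β⁻¹ * r ^ (0 : ℕ) from rfl, hrdef]
      exact aux_rootX K msc z (d : ℂ) β hK0 hK2 hβ0 hdm1 hβdef
    · rw [sumX_some a w (fun n => K⁻¹ * (β⁻¹ * r ^ n))]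
      erw [if_neg (show ¬((some (a, w) : TreeBallX d ℓ) = rootX d ℓ) from
        fun h => neX (a, w) h.symm)]
      have hdep : depthX (some (a, w) : TreeBallX d ℓ) = w.1.length + 1 := rfl
      simp only [hvX, hdep]
      have hwle : w.1.length ≤ ℓ - 1 := w.2
      by_cases hlt : w.1.length < ℓ - 1
      · rw [if_pos hlt, if_neg (by omega), hcast]
        linear_combination hrow β⁻¹ w.1.length
      · have hweq : w.1.length = ℓ - 1 := by omega
        rw [if_neg hlt, if_pos (by omega)]
        obtain ⟨n, hn⟩ : ∃ n, ℓ = n + 1 := ⟨ℓ - 1, by omega⟩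
        rw [hweq, hn]
        simp only [Nat.add_sub_cancel]
        linear_combination hleaf β⁻¹ n
  have resX : MX⁻¹ (rootX d ℓ) (rootX d ℓ)
      = (-z - ((d : ℂ) / ((d : ℂ) - 1)) * msc)⁻¹ := by
    rw [aux_inv_entry MX hdetX vX _ hmulX]
    simp [hvX, hβdef, show depthX (rootX d ℓ) = 0 from rfl]
  exact ⟨resY, resX⟩

end MainProof
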